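/- Let E = EuclideanSpace ℝ (Fin D), let f : E → ℝ be differentiable, M-smooth, satisfy the PL condition with constant μ > 0, 0 < μ ≤ M, infimum f*, and set γ = 1 − μ/M. Let G, σ_g > 0, let n be a positive integer (batch size), and let σ_1, …, σ_T > 0. On a probability space let ξ_1, …, ξ_T and ν_1, …, ν_T be E-valued random vectors such that for each t, the pair (ξ_t, ν_t) is independent of ((ξ_1, ν_1), …, (ξ_{t−1}, ν_{t−1})), ξ_t and ν_t are independent and mean zero with E‖ξ_t‖² ≤ D and E‖ν_t‖² ≤ D. Define θ_1 ∈ E deterministic and θ_{t+1} = θ_t − (1/M)(∇f(θ_t) + (σ_g/n) ξ_t + (G σ_t/n) ν_t). Then E[f(θ_{T+1})] − f* ≤ γ^T (f(θ_1) − f*) + (D σ_g²/(2 μ n²)) + (D G²/(2 M n²)) ∑_{t=1}^T γ^{T−t} σ_t². -/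

import Mathlib

open scoped RealInnerProductSpace
open MeasureTheory ProbabilityTheory Finset

lemma psgd_meas_grad {D : ℕ} (f : EuclideanSpace ℝ (Fin D) → ℝ) : Measurable (gradient f) := by
  have h := measurable_fderiv (𝕜 := ℝ) (f := f)
  exact ((InnerProductSpace.toDual ℝ (EuclideanSpace ℝ (Fin D))).symm.continuous.measurable).comp h

lemma psgd_indep_inner {D : ℕ} {Ω : Type} [MeasureSpace Ω]
    [IsProbabilityMeasure (volume : Measure Ω)]
    {X Y : Ω → EuclideanSpace ℝ (Fin D)}
    (hX : Integrable X) (hY : Integrable Y) (h : IndepFun X Y) :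
    Integrable (fun ω => ⟪X ω, Y ω⟫) ∧
      ∫ ω, ⟪X ω, Y ω⟫ = ⟪∫ ω, X ω, ∫ ω, Y ω⟫ := by
  have hXi : ∀ i, Integrable (fun ω => X ω i) := fun i =>
    (EuclideanSpace.proj i : EuclideanSpace ℝ (Fin D) →L[ℝ] ℝ).integrable_comp hX
  have hYi : ∀ i, Integrable (fun ω => Y ω i) := fun i =>
    (EuclideanSpace.proj i : EuclideanSpace ℝ (Fin D) →L[ℝ] ℝ).integrable_comp hY
  have hmproj : ∀ i : Fin D, Measurable (fun x : EuclideanSpace ℝ (Fin D) => x i) := fun i =>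
    (EuclideanSpace.proj i : EuclideanSpace ℝ (Fin D) →L[ℝ] ℝ).measurable
  have hind : ∀ i : Fin D, IndepFun (fun ω => X ω i) (fun ω => Y ω i) := fun i =>
    h.comp (hmproj i) (hmproj i)
  have hmul : ∀ i : Fin D, Integrable (fun ω => X ω i * Y ω i) := fun i =>
    (hind i).integrable_mul (hXi i) (hYi i)
  have hinner : ∀ ω, ⟪X ω, Y ω⟫ = ∑ i, X ω i * Y ω i := by
    intro ω
    simp [PiLp.inner_apply, RCLike.inner_apply, mul_comm]
  constructor
  · simp only [hinner]
    exact integrable_finset_sum _ fun i _ => hmul i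
  · simp only [hinner]
    rw [integral_finset_sum _ fun i _ => hmul i]
    have : ∀ i : Fin D, ∫ ω, X ω i * Y ω i = (∫ ω, X ω i) * ∫ ω, Y ω i := fun i =>
      (hind i).integral_mul_eq_mul_integral (hXi i).aestronglyMeasurable (hYi i).aestronglyMeasurable
    simp only [this]
    rw [PiLp.inner_apply]
    congr 1
    ext i
    rw [RCLike.inner_apply]
    have h1 : (∫ ω, X ω) i = ∫ ω, X ω i :=
      ((EuclideanSpace.proj i : EuclideanSpace ℝ (Fin D) →L[ℝ] ℝ).integral_comp_comm hX).symm
    have h2 : (∫ ω, Y ω) i = ∫ ω, Y ω i :=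
      ((EuclideanSpace.proj i : EuclideanSpace ℝ (Fin D) →L[ℝ] ℝ).integral_comp_comm hY).symm
    simp [h1, h2, mul_comm]

lemma psgd_grad_sq_le {D : ℕ} (f : EuclideanSpace ℝ (Fin D) → ℝ) {M fstar : ℝ} (hM : 0 < M)
    (hsmooth : ∀ x y : EuclideanSpace ℝ (Fin D),
      f y ≤ f x + ⟪gradient f x, y - x⟫ + M / 2 * ‖y - x‖ ^ 2)
    (hlb : ∀ x, fstar ≤ f x) (x : EuclideanSpace ℝ (Fin D)) :
    ‖gradient f x‖ ^ 2 ≤ 2 * M * (f x - fstar) := by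
  set g := gradient f x with hg
  have h := hsmooth x (x - (1 / M) • g)
  have hd : x - (1 / M) • g - x = -((1 / M) • g) := by abel
  rw [hd] at h
  have hi : ⟪g, -((1 / M) • g)⟫ = -(1 / M * ‖g‖ ^ 2) := by
    rw [inner_neg_right, real_inner_smul_right, real_inner_self_eq_norm_sq]
  have hn : ‖-((1 / M) • g)‖ ^ 2 = (1 / M) ^ 2 * ‖g‖ ^ 2 := by
    rw [norm_neg, norm_smul]
    simp [abs_of_pos (by positivity : (0:ℝ) < 1 / M), mul_pow]
  rw [hi, hn] at h
  have hlb' := hlb (x - (1 / M) • g)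
  have e : -(1 / M * ‖g‖ ^ 2) + M / 2 * ((1 / M) ^ 2 * ‖g‖ ^ 2) = -(‖g‖ ^ 2 / (2 * M)) := by
    field_simp; ring
  have h2 : ‖g‖ ^ 2 / (2 * M) ≤ f x - fstar := by linarith
  have h3 := (div_le_iff₀ (by positivity : (0:ℝ) < 2 * M)).mp h2
  linarith

lemma psgd_pointwise_bound {D : ℕ} (f : EuclideanSpace ℝ (Fin D) → ℝ) {M : ℝ} (hM : 0 < M)
    (hsmooth : ∀ x y : EuclideanSpace ℝ (Fin D),
      f y ≤ f x + ⟪gradient f x, y - x⟫ + M / 2 * ‖y - x‖ ^ 2)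
    (x X Y : EuclideanSpace ℝ (Fin D)) (a b : ℝ) :
    f (x - (1 / M) • (gradient f x + a • X + b • Y)) ≤
      f x - 1 / (2 * M) * ‖gradient f x‖ ^ 2
        + 1 / (2 * M) * (a ^ 2 * ‖X‖ ^ 2 + b ^ 2 * ‖Y‖ ^ 2 + 2 * a * b * ⟪X, Y⟫) := by
  set g := gradient f x with hg
  set u := g + a • X + b • Y with hu
  have h := hsmooth x (x - (1 / M) • u)
  have hd : x - (1 / M) • u - x = -((1 / M) • u) := by abel
  rw [hd] at h
  have hi : ⟪g, -((1 / M) • u)⟫ = -(1 / M * (‖g‖ ^ 2 + a * ⟪g, X⟫ + b * ⟪g, Y⟫)) := by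
    rw [inner_neg_right, real_inner_smul_right, hu, inner_add_right, inner_add_right,
      real_inner_smul_right, real_inner_smul_right, real_inner_self_eq_norm_sq]
  have hsm : ∀ (c : ℝ) (v : EuclideanSpace ℝ (Fin D)), ‖c • v‖ ^ 2 = c ^ 2 * ‖v‖ ^ 2 := by
    intro c v
    rw [norm_smul]
    simp [mul_pow, sq_abs]
  have hn : ‖-((1 / M) • u)‖ ^ 2 = (1 / M) ^ 2 *
      (‖g‖ ^ 2 + a ^ 2 * ‖X‖ ^ 2 + b ^ 2 * ‖Y‖ ^ 2
        + 2 * a * ⟪g, X⟫ + 2 * b * ⟪g, Y⟫ + 2 * a * b * ⟪X, Y⟫) := by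
    rw [norm_neg, hsm, hu]
    congr 1
    rw [norm_add_sq_real (g + a • X) (b • Y), norm_add_sq_real g (a • X),
      inner_add_left, real_inner_smul_left, real_inner_smul_right, real_inner_smul_right,
      hsm, hsm, real_inner_smul_right]
    ring
  rw [hi, hn] at h
  have e : f x + -(1 / M * (‖g‖ ^ 2 + a * ⟪g, X⟫ + b * ⟪g, Y⟫))
      + M / 2 * ((1 / M) ^ 2 *
        (‖g‖ ^ 2 + a ^ 2 * ‖X‖ ^ 2 + b ^ 2 * ‖Y‖ ^ 2
          + 2 * a * ⟪g, X⟫ + 2 * b * ⟪g, Y⟫ + 2 * a * b * ⟪X, Y⟫))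
      = f x - 1 / (2 * M) * ‖g‖ ^ 2
        + 1 / (2 * M) * (a ^ 2 * ‖X‖ ^ 2 + b ^ 2 * ‖Y‖ ^ 2 + 2 * a * b * ⟪X, Y⟫) := by
    field_simp
    ring
  linarith

/-- **Utility bound for Private Stochastic Gradient Descent under the PL condition.**
With step size `1/M`, stochastic gradient `∇f(θ_t) + (σ_g/n) ξ_t` and privacy noise
`(G σ_t/n) ν_t` (both mean zero with second moments at most `D`, `ξ_t ⟂ ν_t`, and the pair
independent of the past), `γ = 1 - μ/M`, the final expected excess risk satisfies
`E[f(θ_{T+1})] - f* ≤ γ^T (f(θ₁) - f*) + D σ_g²/(2 μ n²)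
  + (D G²/(2 M n²)) ∑_{t=1}^T γ^{T-t} σ_t²`. -/
theorem private_sgd_excess_risk
    (D T : ℕ) (hT : 0 < T)
    (f : EuclideanSpace ℝ (Fin D) → ℝ) (M μ fstar G σg : ℝ) (n : ℕ)
    (hdiff : Differentiable ℝ f) (hM : 0 < M) (hμ : 0 < μ) (hμM : μ ≤ M)
    (hsmooth : ∀ x y : EuclideanSpace ℝ (Fin D),
      f y ≤ f x + ⟪gradient f x, y - x⟫ + M / 2 * ‖y - x‖ ^ 2)
    (hfstar : IsGLB (Set.range f) fstar)
    (hPL : ∀ θ : EuclideanSpace ℝ (Fin D), ‖gradient f θ‖ ^ 2 ≥ 2 * μ * (f θ - fstar))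
    (hG : 0 < G) (hσg : 0 < σg) (hn : 0 < n)
    (σ : ℕ → ℝ) (hσ : ∀ t, 0 < σ t)
    (Ω : Type) [MeasureSpace Ω] [IsProbabilityMeasure (volume : Measure Ω)]
    (ξ ν : ℕ → Ω → EuclideanSpace ℝ (Fin D))
    (hmeasξ : ∀ t, Measurable (ξ t)) (hmeasν : ∀ t, Measurable (ν t))
    (hintξ : ∀ t, Integrable (ξ t)) (hintν : ∀ t, Integrable (ν t))
    (hmeanξ : ∀ t, ∫ ω, ξ t ω = 0) (hmeanν : ∀ t, ∫ ω, ν t ω = 0)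
    (hmoment2intξ : ∀ t, Integrable (fun ω => ‖ξ t ω‖ ^ 2))
    (hmoment2intν : ∀ t, Integrable (fun ω => ‖ν t ω‖ ^ 2))
    (hmoment2ξ : ∀ t, ∫ ω, ‖ξ t ω‖ ^ 2 ≤ (D : ℝ))
    (hmoment2ν : ∀ t, ∫ ω, ‖ν t ω‖ ^ 2 ≤ (D : ℝ))
    (hindepξν : ∀ t, IndepFun (ξ t) (ν t))
    (hindeppast : ∀ t, IndepFun (fun ω => (ξ t ω, ν t ω))
      (fun ω (i : Fin (t - 1)) => (ξ (i + 1) ω, ν (i + 1) ω)))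
    (θ₁ : EuclideanSpace ℝ (Fin D))
    (θ : ℕ → Ω → EuclideanSpace ℝ (Fin D))
    (hθ₁ : ∀ ω, θ 1 ω = θ₁)
    (hiter : ∀ t ω, 1 ≤ t →
      θ (t + 1) ω = θ t ω - (1 / M) •
        (gradient f (θ t ω) + (σg / (n : ℝ)) • ξ t ω + (G * σ t / (n : ℝ)) • ν t ω))
    (hfint : ∀ t, Integrable (fun ω => f (θ t ω))) :
    (∫ ω, f (θ (T + 1) ω)) - fstar ≤
      (1 - μ / M) ^ T * (f θ₁ - fstar)
        + (D : ℝ) * σg ^ 2 / (2 * μ * (n : ℝ) ^ 2)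
        + ((D : ℝ) * G ^ 2 / (2 * M * (n : ℝ) ^ 2)) *
            ∑ t ∈ Icc 1 T, (1 - μ / M) ^ (T - t) * σ t ^ 2 := by
  have hn0 : (0:ℝ) < (n:ℝ) := by exact_mod_cast hn
  have hlb : ∀ x, fstar ≤ f x := fun x => hfstar.1 ⟨x, rfl⟩
  set γ : ℝ := 1 - μ / M with hγdef
  have hγ0 : 0 ≤ γ := by
    have : μ / M ≤ 1 := (div_le_one hM).mpr hμM
    simp only [hγdef]; linarith
  have hγ1 : γ < 1 := by
    have : 0 < μ / M := div_pos hμ hM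
    simp only [hγdef]; linarith
  set c : ℝ := (D : ℝ) * σg ^ 2 / (2 * M * (n : ℝ) ^ 2) with hcdef
  set cσ : ℝ := (D : ℝ) * G ^ 2 / (2 * M * (n : ℝ) ^ 2) with hcσdef
  have hc0 : 0 ≤ c := by positivity
  have hcσ0 : 0 ≤ cσ := by positivity
  -- measurability of the iterates
  have hmeasθ : ∀ t, 1 ≤ t → Measurable (θ t) := by
    intro t ht
    induction t with
    | zero => omega
    | succ s ih =>
      rcases Nat.eq_zero_or_pos s with hs | hs
      · subst hs
        have : θ 1 = fun _ => θ₁ := funext hθ₁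
        rw [this]; exact measurable_const
      · have ihm := ih hs
        have hrw : θ (s + 1) = fun ω => θ s ω - (1 / M) •
            (gradient f (θ s ω) + (σg / (n : ℝ)) • ξ s ω + (G * σ s / (n : ℝ)) • ν s ω) :=
          funext fun ω => hiter s ω hs
        rw [hrw]
        exact ihm.sub (((((psgd_meas_grad f).comp ihm).add
          ((hmeasξ s).const_smul (σg / (n : ℝ)))).add ((hmeasν s).const_smul (G * σ s / (n : ℝ)))).const_smul (1 / M))
  -- integrability of the squared gradient norm
  have hintg : ∀ t, 1 ≤ t → Integrable (fun ω => ‖gradient f (θ t ω)‖ ^ 2) := by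
    intro t ht
    refine Integrable.mono' (g := fun ω => 2 * M * (f (θ t ω) - fstar))
      (((hfint t).sub (integrable_const fstar)).const_mul _) ?_ ?_
    · exact ((((psgd_meas_grad f).comp (hmeasθ t ht)).norm.pow_const 2).aestronglyMeasurable)
    · filter_upwards with ω
      rw [Real.norm_eq_abs, abs_of_nonneg (by positivity)]
      exact psgd_grad_sq_le f hM hsmooth hlb (θ t ω)
  -- per-step inequality in expectation
  have hstep : ∀ t, 1 ≤ t → (∫ ω, f (θ (t + 1) ω)) - fstar ≤
      γ * ((∫ ω, f (θ t ω)) - fstar) + c + cσ * σ t ^ 2 := by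
    intro t ht
    set a : ℝ := σg / (n : ℝ) with hadef
    set b : ℝ := G * σ t / (n : ℝ) with hbdef
    have hpt : ∀ ω, f (θ (t + 1) ω) ≤ f (θ t ω)
        - 1 / (2 * M) * ‖gradient f (θ t ω)‖ ^ 2
        + 1 / (2 * M) * (a ^ 2 * ‖ξ t ω‖ ^ 2 + b ^ 2 * ‖ν t ω‖ ^ 2
            + 2 * a * b * ⟪ξ t ω, ν t ω⟫) := by
      intro ω
      rw [hiter t ω ht]
      exact psgd_pointwise_bound f hM hsmooth (θ t ω) (ξ t ω) (ν t ω) a b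
    have hip := psgd_indep_inner (hintξ t) (hintν t) (hindepξν t)
    have hI1 : Integrable (fun ω => a ^ 2 * ‖ξ t ω‖ ^ 2 + b ^ 2 * ‖ν t ω‖ ^ 2
        + 2 * a * b * ⟪ξ t ω, ν t ω⟫) :=
      (((hmoment2intξ t).const_mul _).add ((hmoment2intν t).const_mul _)).add
        (hip.1.const_mul _)
    have hIright : Integrable (fun ω => f (θ t ω)
        - 1 / (2 * M) * ‖gradient f (θ t ω)‖ ^ 2
        + 1 / (2 * M) * (a ^ 2 * ‖ξ t ω‖ ^ 2 + b ^ 2 * ‖ν t ω‖ ^ 2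
            + 2 * a * b * ⟪ξ t ω, ν t ω⟫)) :=
      ((hfint t).sub ((hintg t ht).const_mul _)).add (hI1.const_mul _)
    have hI2 : Integrable (fun ω => f (θ t ω)
        - 1 / (2 * M) * ‖gradient f (θ t ω)‖ ^ 2) :=
      (hfint t).sub ((hintg t ht).const_mul _)
    have hI3 : Integrable (fun ω => a ^ 2 * ‖ξ t ω‖ ^ 2 + b ^ 2 * ‖ν t ω‖ ^ 2) :=
      ((hmoment2intξ t).const_mul _).add ((hmoment2intν t).const_mul _)
    have hI4 : Integrable (fun ω => a ^ 2 * ‖ξ t ω‖ ^ 2) := (hmoment2intξ t).const_mul _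
    have hI5 : Integrable (fun ω => b ^ 2 * ‖ν t ω‖ ^ 2) := (hmoment2intν t).const_mul _
    have hI6 : Integrable (fun ω => (2 * a * b) * ⟪ξ t ω, ν t ω⟫) := hip.1.const_mul _
    have hmono := integral_mono (hfint (t + 1)) hIright hpt
    have hsplit : ∫ ω, (f (θ t ω)
        - 1 / (2 * M) * ‖gradient f (θ t ω)‖ ^ 2
        + 1 / (2 * M) * (a ^ 2 * ‖ξ t ω‖ ^ 2 + b ^ 2 * ‖ν t ω‖ ^ 2
            + 2 * a * b * ⟪ξ t ω, ν t ω⟫))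
        = (∫ ω, f (θ t ω)) - 1 / (2 * M) * (∫ ω, ‖gradient f (θ t ω)‖ ^ 2)
          + 1 / (2 * M) * (a ^ 2 * (∫ ω, ‖ξ t ω‖ ^ 2) + b ^ 2 * (∫ ω, ‖ν t ω‖ ^ 2)
            + 2 * a * b * (∫ ω, ⟪ξ t ω, ν t ω⟫)) := by
      rw [integral_add hI2 (hI1.const_mul _),
        integral_sub (hfint t) ((hintg t ht).const_mul _),
        integral_const_mul, integral_const_mul,
        integral_add hI3 hI6, integral_add hI4 hI5,
        integral_const_mul, integral_const_mul, integral_const_mul]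
    have hinner0 : ∫ ω, ⟪ξ t ω, ν t ω⟫ = 0 := by
      rw [hip.2, hmeanξ t, hmeanν t, inner_zero_left]
    rw [hsplit, hinner0] at hmono
    -- PL in expectation
    have hPLi : 2 * μ * ((∫ ω, f (θ t ω)) - fstar) ≤ ∫ ω, ‖gradient f (θ t ω)‖ ^ 2 := by
      have hIPL : Integrable (fun ω => 2 * μ * (f (θ t ω) - fstar)) :=
        ((hfint t).sub (integrable_const fstar)).const_mul (2 * μ)
      have h := integral_mono hIPL (hintg t ht) (fun ω => hPL (θ t ω))
      rwa [integral_const_mul, integral_sub (hfint t) (integrable_const fstar),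
        integral_const, probReal_univ, smul_eq_mul, one_mul] at h
    set F : ℝ := ∫ ω, f (θ t ω) with hF
    set Ig : ℝ := ∫ ω, ‖gradient f (θ t ω)‖ ^ 2 with hIg
    have hA : 1 / (2 * M) * (2 * μ * (F - fstar)) ≤ 1 / (2 * M) * Ig :=
      mul_le_mul_of_nonneg_left hPLi (by positivity)
    have hB : a ^ 2 * (∫ ω, ‖ξ t ω‖ ^ 2) ≤ a ^ 2 * (D : ℝ) :=
      mul_le_mul_of_nonneg_left (hmoment2ξ t) (sq_nonneg a)
    have hC : b ^ 2 * (∫ ω, ‖ν t ω‖ ^ 2) ≤ b ^ 2 * (D : ℝ) :=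
      mul_le_mul_of_nonneg_left (hmoment2ν t) (sq_nonneg b)
    have hD2 : 1 / (2 * M) * (a ^ 2 * (∫ ω, ‖ξ t ω‖ ^ 2) + b ^ 2 * (∫ ω, ‖ν t ω‖ ^ 2)
        + 2 * a * b * 0) ≤ 1 / (2 * M) * (a ^ 2 * (D : ℝ) + b ^ 2 * (D : ℝ)) :=
      mul_le_mul_of_nonneg_left (by linarith) (by positivity)
    have e1 : 1 / (2 * M) * (2 * μ * (F - fstar)) = μ / M * (F - fstar) := by
      field_simp
    have e2 : 1 / (2 * M) * (a ^ 2 * (D : ℝ) + b ^ 2 * (D : ℝ)) = c + cσ * σ t ^ 2 := by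
      simp only [hadef, hbdef, hcdef, hcσdef]
      field_simp
    have e3 : γ * (F - fstar) = (F - fstar) - μ / M * (F - fstar) := by
      simp only [hγdef]; ring
    clear_value F Ig c cσ γ
    linarith
  -- value at time 1
  have hE1 : (∫ ω, f (θ 1 ω)) = f θ₁ := by
    have : (fun ω => f (θ 1 ω)) = fun _ : Ω => f θ₁ := funext fun ω => by rw [hθ₁]
    rw [this, integral_const, probReal_univ, smul_eq_mul, one_mul]
  -- unrolled recursion
  have hunroll : ∀ s : ℕ, (∫ ω, f (θ (s + 1) ω)) - fstar ≤
      γ ^ s * (f θ₁ - fstar) + ∑ t ∈ Icc 1 s, γ ^ (s - t) * (c + cσ * σ t ^ 2) := by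
    intro s
    induction s with
    | zero => simp [hE1]
    | succ s ih =>
      have h1 := hstep (s + 1) (Nat.le_add_left 1 s)
      have h2 : γ * ((∫ ω, f (θ (s + 1) ω)) - fstar) ≤
          γ * (γ ^ s * (f θ₁ - fstar) + ∑ t ∈ Icc 1 s, γ ^ (s - t) * (c + cσ * σ t ^ 2)) :=
        mul_le_mul_of_nonneg_left ih hγ0
      have hsum : ∑ t ∈ Icc 1 (s + 1), γ ^ (s + 1 - t) * (c + cσ * σ t ^ 2)
          = γ * ∑ t ∈ Icc 1 s, γ ^ (s - t) * (c + cσ * σ t ^ 2)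
            + (c + cσ * σ (s + 1) ^ 2) := by
        rw [Finset.sum_Icc_succ_top (Nat.le_add_left 1 s), Finset.mul_sum]
        congr 1
        · refine Finset.sum_congr rfl fun t htm => ?_
          have ht' : t ≤ s := (Finset.mem_Icc.mp htm).2
          rw [Nat.succ_sub ht', pow_succ]
          ring
        · simp
      calc (∫ ω, f (θ (s + 1 + 1) ω)) - fstar
          ≤ γ * ((∫ ω, f (θ (s + 1) ω)) - fstar) + c + cσ * σ (s + 1) ^ 2 := h1
        _ ≤ γ * (γ ^ s * (f θ₁ - fstar) + ∑ t ∈ Icc 1 s, γ ^ (s - t) * (c + cσ * σ t ^ 2))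
            + c + cσ * σ (s + 1) ^ 2 := by linarith
        _ = γ ^ (s + 1) * (f θ₁ - fstar)
            + ∑ t ∈ Icc 1 (s + 1), γ ^ (s + 1 - t) * (c + cσ * σ t ^ 2) := by
          rw [hsum, pow_succ]
          ring
  have hmain := hunroll T
  -- split the sum
  have hsplit2 : ∑ t ∈ Icc 1 T, γ ^ (T - t) * (c + cσ * σ t ^ 2)
      = c * (∑ t ∈ Icc 1 T, γ ^ (T - t))
        + cσ * ∑ t ∈ Icc 1 T, γ ^ (T - t) * σ t ^ 2 := by
    rw [Finset.mul_sum, Finset.mul_sum, ← Finset.sum_add_distrib]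
    refine Finset.sum_congr rfl fun t _ => by ring
  -- geometric sum bound
  have hgeomeq : ∀ s : ℕ, ∑ t ∈ Icc 1 s, γ ^ (s - t) = ∑ k ∈ range s, γ ^ k := by
    intro s
    induction s with
    | zero => simp
    | succ s ih =>
      have hshift : ∑ t ∈ Icc 1 s, γ ^ (s + 1 - t) = γ * ∑ t ∈ Icc 1 s, γ ^ (s - t) := by
        rw [Finset.mul_sum]
        refine Finset.sum_congr rfl fun t htm => ?_
        have ht' : t ≤ s := (Finset.mem_Icc.mp htm).2
        rw [Nat.succ_sub ht', pow_succ]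
        ring
      rw [Finset.sum_Icc_succ_top (Nat.le_add_left 1 s), hshift, ih, Nat.sub_self,
        pow_zero, geom_sum_succ]
  have hgeom : ∑ t ∈ Icc 1 T, γ ^ (T - t) ≤ M / μ := by
    rw [hgeomeq T]
    have hγne : γ ≠ 1 := ne_of_lt hγ1
    have h1γ : 0 < 1 - γ := by linarith
    have heq := geom_sum_eq hγne T
    rw [heq]
    have hpow : 0 ≤ γ ^ T := pow_nonneg hγ0 T
    have h1 : (γ ^ T - 1) / (γ - 1) = (1 - γ ^ T) / (1 - γ) := by
      rw [div_eq_div_iff (by linarith) (by linarith)]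
      ring
    rw [h1]
    have h2 : (1 - γ ^ T) / (1 - γ) ≤ 1 / (1 - γ) := by
      gcongr <;> linarith [pow_nonneg hγ0 T]
    have h3 : 1 / (1 - γ) = M / μ := by
      have : 1 - γ = μ / M := by simp only [hγdef]; ring
      rw [this, one_div_div]
    linarith [h2, h3.le, h3.ge]
  have hcM : c * (M / μ) = (D : ℝ) * σg ^ 2 / (2 * μ * (n : ℝ) ^ 2) := by
    simp only [hcdef]
    field_simp
  have hfinal : c * (∑ t ∈ Icc 1 T, γ ^ (T - t)) ≤
      (D : ℝ) * σg ^ 2 / (2 * μ * (n : ℝ) ^ 2) := by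
    calc c * (∑ t ∈ Icc 1 T, γ ^ (T - t)) ≤ c * (M / μ) :=
          mul_le_mul_of_nonneg_left hgeom hc0
      _ = _ := hcM
  rw [hsplit2] at hmain
  linarith
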